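/- Pointwise coordinate bounds from the functional Q: there exists a constant C > 0 (depending only on d, U, K) such that for every configuration x ∈ X with Q(x) ≤ M < ∞ and every site i ∈ ℤ^d one has p_i² + U(q_i) ≤ C M log(e + |i|), q_i⁴ ≤ C M log(e + |i|), and |U''(q_i)| ≤ C (M log(e + |i|))^{1/2}. -/

import Mathlib

open MeasureTheory Real Filter
open scoped ENNReal

noncomputable section

/-- A site of the `d`-dimensional integer lattice. -/
abbrev Site (d : ℕ) := Fin d → ℤ

/-- A configuration: at each site, a position `q` and a momentum `p`. -/
abbrev Conf (d : ℕ) := Site d → ℝ × ℝ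

/-- ℓ¹ norm on the lattice. -/
def lnorm {d : ℕ} (ν : Site d) : ℤ := ∑ ℓ, |ν ℓ|

/-- ℓ¹ distance on the lattice. -/
def ldist {d : ℕ} (i j : Site d) : ℤ := ∑ ℓ, |i ℓ - j ℓ|

/-- The cube `Λ_{ν,k}` of center `ν` and side `2k+1`. -/
def cube {d : ℕ} (ν : Site d) (k : ℕ) : Finset (Site d) :=
  Fintype.piFinset fun ℓ => Finset.Icc (ν ℓ - (k : ℤ)) (ν ℓ + (k : ℤ))

/-- The local energy `W_{ν,k}(x)`. -/
noncomputable def Wen {d : ℕ} (U : Polynomial ℝ) (K : ℝ) (ν : Site d) (k : ℕ)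
    (x : Conf d) : ℝ :=
  (∑ i ∈ cube ν k, ((x i).2 ^ 2 / 2 + U.eval (x i).1 + 1)) +
    K / 4 * ∑ i ∈ cube ν k, ∑ j ∈ cube ν k,
      (if ldist i j = 1 then ((x i).1 - (x j).1) ^ 2 else 0)

/-- The functional `Q(x) = sup_ν sup_{k > log^{1/d}(e+|ν|)} W_{ν,k}(x)/(2k+1)^d`,
with values in `[0,∞]`. -/
noncomputable def Qen {d : ℕ} (U : Polynomial ℝ) (K : ℝ) (x : Conf d) : ℝ≥0∞ :=
  ⨆ ν : Site d, ⨆ k : ℕ,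
    ⨆ _ : Real.log (Real.exp 1 + (lnorm ν : ℝ)) ^ ((1 : ℝ) / (d : ℝ)) < (k : ℝ),
      ENNReal.ofReal (Wen U K ν k x / (2 * (k : ℝ) + 1) ^ d)

/-- The good set of configurations `X₀ = {x : Q(x) < ∞}`. -/
def X0 (d : ℕ) (U : Polynomial ℝ) (K : ℝ) : Set (Conf d) := {x | Qen U K x < ⊤}

section Helpers
open Polynomial Filter

lemma poly_lb (U : Polynomial ℝ) (hUdeg : U.degree = 4) (hUlead : 0 < U.leadingCoeff) :
    ∃ c1 c2 : ℝ, 0 ≤ c1 ∧ 0 ≤ c2 ∧ ∀ q : ℝ, q ^ 4 ≤ c1 * U.eval q + c2 := by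
  set a := U.leadingCoeff with ha
  have hnd : U.natDegree = 4 := natDegree_eq_of_degree_eq_some hUdeg
  set P : Polynomial ℝ := U - C (a / 2) * X ^ 4 with hP
  have hc4 : P.coeff 4 = a / 2 := by
    have : U.coeff 4 = a := by rw [ha, leadingCoeff, hnd]
    simp [hP, coeff_C_mul, coeff_X_pow, this]
    ring
  have hdegP : P.degree = 4 := by
    refine degree_eq_of_le_of_coeff_ne_zero ?_ (by rw [hc4]; positivity)
    refine (degree_sub_le _ _).trans (max_le hUdeg.le ?_)
    exact (degree_C_mul_X_pow_le _ _)
  have hndP : P.natDegree = 4 := natDegree_eq_of_degree_eq_some hdegP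
  have hlP : P.leadingCoeff = a / 2 := by rw [leadingCoeff, hndP, hc4]
  have htop : Tendsto (fun x => eval x P) atTop atTop :=
    P.tendsto_atTop_of_leadingCoeff_nonneg (by rw [hdegP]; norm_num) (by rw [hlP]; positivity)
  -- atBot
  set Pm : Polynomial ℝ := P.comp (-X) with hPm
  have hndX : (-X : Polynomial ℝ).natDegree = 1 := by simp
  have hndPm : Pm.natDegree = 4 := by rw [hPm, natDegree_comp, hndX, hndP]
  have hlPm : Pm.leadingCoeff = a / 2 := by
    rw [hPm, leadingCoeff_comp (by rw [hndX]; norm_num), hlP, hndP]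
    norm_num
  have htopm : Tendsto (fun x => eval x Pm) atTop atTop :=
    Pm.tendsto_atTop_of_leadingCoeff_nonneg
      (by rw [degree_eq_natDegree (fun h => by simp [h] at hndPm), hndPm]; norm_num)
      (by rw [hlPm]; positivity)
  have hbot : Tendsto (fun x => eval x P) atBot atTop := by
    have := htopm.comp tendsto_neg_atBot_atTop
    simp only [Function.comp_def] at this
    convert this using 2 with x
    simp [hPm, eval_comp]
  have hco : Tendsto (fun x => eval x P) (cocompact ℝ) atTop := by
    rw [cocompact_eq_atBot_atTop]
    exact tendsto_sup.2 ⟨hbot, htop⟩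
  obtain ⟨x0, hx0⟩ := P.continuous.exists_forall_le hco
  set m := eval x0 P with hm
  refine ⟨2 / a, 2 / a * max (-m) 0, by positivity, by positivity, fun q => ?_⟩
  have h1 : m ≤ eval q P := hx0 q
  have h2 : eval q P = U.eval q - a / 2 * q ^ 4 := by simp [hP]
  have hq : a / 2 * q ^ 4 ≤ U.eval q - m := by linarith [h2 ▸ h1]
  have h3 : -m ≤ max (-m) 0 := le_max_left _ _
  have h4 : q ^ 4 ≤ 2 / a * (U.eval q - m) := by
    rw [div_mul_eq_mul_div, le_div_iff₀ hUlead]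
    nlinarith
  have h5 : 2 / a * (U.eval q - m) ≤ 2 / a * U.eval q + 2 / a * max (-m) 0 := by
    have : 0 ≤ 2 / a := by positivity
    nlinarith
  linarith

lemma dd_bound (U : Polynomial ℝ) (hUdeg : U.degree = 4) :
    ∃ c3 : ℝ, 0 ≤ c3 ∧ ∀ q : ℝ,
      |(derivative (derivative U)).eval q| ≤ c3 * (q ^ 2 + 1) := by
  set V := derivative (derivative U) with hV
  have hnd : U.natDegree = 4 := natDegree_eq_of_degree_eq_some hUdeg
  have hndV : V.natDegree < 3 := by
    have h1 : (derivative U).natDegree ≤ 3 := by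
      have := natDegree_derivative_le U; omega
    have h2 : V.natDegree ≤ (derivative U).natDegree - 1 := natDegree_derivative_le _
    omega
  refine ⟨|V.coeff 0| + |V.coeff 1| + |V.coeff 2|, by positivity, fun q => ?_⟩
  have he : V.eval q = V.coeff 0 + V.coeff 1 * q + V.coeff 2 * q ^ 2 := by
    rw [eval_eq_sum_range' hndV]
    simp [Finset.sum_range_succ]
  rw [he]
  have habs : |V.coeff 0 + V.coeff 1 * q + V.coeff 2 * q ^ 2| ≤
      |V.coeff 0| + |V.coeff 1| * |q| + |V.coeff 2| * q ^ 2 := by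
    calc _ ≤ |V.coeff 0 + V.coeff 1 * q| + |V.coeff 2 * q ^ 2| := abs_add_le _ _
    _ ≤ |V.coeff 0| + |V.coeff 1 * q| + |V.coeff 2 * q ^ 2| := by
        linarith [abs_add_le (V.coeff 0) (V.coeff 1 * q)]
    _ = _ := by rw [abs_mul, abs_mul, abs_pow, sq_abs]
  have ht : |q| ≤ q ^ 2 + 1 := by nlinarith [sq_nonneg (|q| - 1), sq_abs q, abs_nonneg q]
  nlinarith [abs_nonneg (V.coeff 0), abs_nonneg (V.coeff 1), abs_nonneg (V.coeff 2),
    abs_nonneg q, sq_nonneg q]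

end Helpers

lemma cube_card {d : ℕ} (ν : Site d) (k : ℕ) : (cube ν k).card = (2 * k + 1) ^ d := by
  rw [cube, Fintype.card_piFinset]
  have : ∀ ℓ : Fin d, (Finset.Icc (ν ℓ - (k : ℤ)) (ν ℓ + (k : ℤ))).card = 2 * k + 1 := by
    intro ℓ; rw [Int.card_Icc]; omega
  simp [this]

lemma center_mem_cube {d : ℕ} (ν : Site d) (k : ℕ) : ν ∈ cube ν k := by
  simp [cube, Fintype.mem_piFinset]

lemma Wen_lb {d : ℕ} (U : Polynomial ℝ) (K : ℝ) (hK : 0 < K)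
    (hUpos : ∀ y : ℝ, 0 ≤ U.eval y) (ν : Site d) (k : ℕ) (x : Conf d) :
    ((2 * (k:ℝ) + 1) ^ d ≤ Wen U K ν k x) ∧
      ((x ν).2 ^ 2 / 2 + U.eval (x ν).1 + 1 ≤ Wen U K ν k x) := by
  have hcoup : 0 ≤ K / 4 * ∑ i ∈ cube ν k, ∑ j ∈ cube ν k,
      (if ldist i j = 1 then ((x i).1 - (x j).1) ^ 2 else 0) := by
    apply mul_nonneg (by positivity)
    apply Finset.sum_nonneg; intro i _
    apply Finset.sum_nonneg; intro j _
    split <;> positivity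
  have hterm : ∀ j ∈ cube ν k, (1:ℝ) ≤ (x j).2 ^ 2 / 2 + U.eval (x j).1 + 1 := by
    intro j _
    have h1 := hUpos (x j).1
    have h2 : (0:ℝ) ≤ (x j).2 ^ 2 / 2 := by positivity
    linarith
  constructor
  · have h1 : ((cube ν k).card : ℝ) * 1 ≤
        ∑ j ∈ cube ν k, ((x j).2 ^ 2 / 2 + U.eval (x j).1 + 1) := by
      rw [mul_one]
      calc ((cube ν k).card : ℝ) = ∑ _j ∈ cube ν k, (1:ℝ) := by simp
      _ ≤ _ := Finset.sum_le_sum hterm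
    have h2 : ((cube ν k).card : ℝ) = (2 * (k:ℝ) + 1) ^ d := by
      rw [cube_card]; push_cast; ring
    rw [Wen]; rw [h2] at h1; linarith
  · have h1 : (x ν).2 ^ 2 / 2 + U.eval (x ν).1 + 1 ≤
        ∑ j ∈ cube ν k, ((x j).2 ^ 2 / 2 + U.eval (x j).1 + 1) :=
      Finset.single_le_sum (f := fun j => (x j).2 ^ 2 / 2 + U.eval (x j).1 + 1)
        (fun j hj => by linarith [hterm j hj]) (center_mem_cube ν k)
    rw [Wen]; linarith

/-- Pointwise coordinate bounds from the functional `Q`: if `Q(x) ≤ M` then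
`p_i² + U(q_i) ≤ C M log(e+|i|)`, `q_i⁴ ≤ C M log(e+|i|)` and
`|U''(q_i)| ≤ C (M log(e+|i|))^{1/2}`, with `C` depending only on `d`, `U`, `K`. -/
theorem statement6 {d : ℕ} (hd : 0 < d) (U : Polynomial ℝ) (hUdeg : U.degree = 4)
    (hUpos : ∀ y : ℝ, 0 ≤ U.eval y) (hUlead : 0 < U.leadingCoeff)
    (K : ℝ) (hK : 0 < K) :
    ∃ C > (0:ℝ), ∀ (x : Conf d) (M : ℝ), Qen U K x ≤ ENNReal.ofReal M →
      ∀ i : Site d,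
        (x i).2 ^ 2 + U.eval (x i).1 ≤
            C * M * Real.log (Real.exp 1 + (lnorm i : ℝ)) ∧
        (x i).1 ^ 4 ≤ C * M * Real.log (Real.exp 1 + (lnorm i : ℝ)) ∧
        |(Polynomial.derivative (Polynomial.derivative U)).eval (x i).1| ≤
            C * Real.sqrt (M * Real.log (Real.exp 1 + (lnorm i : ℝ))) := by
  obtain ⟨c1, c2, hc1, hc2, hpoly⟩ := poly_lb U hUdeg hUlead
  obtain ⟨c3, hc3, hdd⟩ := dd_bound U hUdeg
  set C1 : ℝ := 2 * 7 ^ d with hC1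
  set C2 : ℝ := C1 * c1 + c2 with hC2
  set C3 : ℝ := c3 * Real.sqrt C2 + c3 with hC3
  have h7 : (0:ℝ) < 7 ^ d := by positivity
  have hC1pos : 0 < C1 := by rw [hC1]; positivity
  have hC2nn : 0 ≤ C2 := by rw [hC2, hC1]; positivity
  have hC3nn : 0 ≤ C3 := by
    rw [hC3]; have := Real.sqrt_nonneg C2; positivity
  set Cb : ℝ := max (max C1 C2) C3 + 1 with hCb
  have hC1C : C1 ≤ Cb := by
    have := le_max_left C1 C2; have := le_max_left (max C1 C2) C3; rw [hCb]; linarith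
  have hC2C : C2 ≤ Cb := by
    have := le_max_right C1 C2; have := le_max_left (max C1 C2) C3; rw [hCb]; linarith
  have hC3C : C3 ≤ Cb := by
    have := le_max_right (max C1 C2) C3; rw [hCb]; linarith
  refine ⟨Cb, by linarith, fun x M hQ i => ?_⟩
  set L : ℝ := Real.log (Real.exp 1 + (lnorm i : ℝ)) with hL
  have hlnn : (0:ℝ) ≤ (lnorm i : ℝ) := by
    have : (0:ℤ) ≤ lnorm i := Finset.sum_nonneg fun _ _ => abs_nonneg _
    exact_mod_cast this
  have hL1 : 1 ≤ L := by
    calc (1:ℝ) = Real.log (Real.exp 1) := (Real.log_exp 1).symm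
    _ ≤ L := Real.log_le_log (Real.exp_pos 1) (by linarith)
  have hLpos : 0 < L := by linarith
  have hdR : 0 < (d:ℝ) := by exact_mod_cast hd
  set R : ℝ := L ^ ((1:ℝ)/(d:ℝ)) with hR
  have hR1 : 1 ≤ R := Real.one_le_rpow hL1 (by positivity)
  set k : ℕ := ⌈R⌉₊ + 1 with hk
  have hkR : R < (k:ℝ) := by
    have h := Nat.le_ceil R
    have : ((⌈R⌉₊ : ℝ)) < (k:ℝ) := by rw [hk]; push_cast; linarith
    linarith
  have hkle : (k:ℝ) ≤ R + 2 := by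
    have := Nat.ceil_lt_add_one (R := ℝ) (by linarith : (0:ℝ) ≤ R)
    rw [hk]; push_cast; linarith
  have h2k7 : 2*(k:ℝ)+1 ≤ 7*R := by linarith
  have hRd : R ^ d = L := by
    rw [hR, ← Real.rpow_natCast (L ^ ((1:ℝ)/(d:ℝ))) d, ← Real.rpow_mul hLpos.le,
      one_div_mul_cancel (ne_of_gt hdR), Real.rpow_one]
  have hpow : (2*(k:ℝ)+1) ^ d ≤ 7 ^ d * L := by
    calc (2*(k:ℝ)+1)^d ≤ (7*R)^d := by
          apply pow_le_pow_left₀ (by positivity) h2k7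
    _ = 7^d * R^d := mul_pow _ _ _
    _ = 7^d * L := by rw [hRd]
  have hden : (0:ℝ) < (2*(k:ℝ)+1)^d := by positivity
  obtain ⟨hWcard, hWi⟩ := Wen_lb U K hK hUpos i k x
  have key : ENNReal.ofReal (Wen U K i k x / (2*(k:ℝ)+1)^d) ≤ ENNReal.ofReal M := by
    refine le_trans ?_ hQ
    simp only [Qen]
    exact le_iSup_of_le i (le_iSup_of_le k (le_iSup_of_le hkR le_rfl))
  have h1le : 1 ≤ Wen U K i k x / (2*(k:ℝ)+1)^d := (one_le_div hden).mpr hWcard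
  have hM : Wen U K i k x / (2*(k:ℝ)+1)^d ≤ M := by
    rcases ENNReal.ofReal_le_ofReal_iff'.mp key with h | h
    · exact h
    · linarith
  have hM1 : 1 ≤ M := le_trans h1le hM
  have hML : 1 ≤ M * L := by
    have := mul_le_mul_of_nonneg_left hL1 (by linarith : (0:ℝ) ≤ M); nlinarith
  have hMLnn : (0:ℝ) ≤ M * L := by linarith
  have hW : Wen U K i k x ≤ 7^d * (M*L) := by
    calc Wen U K i k x ≤ M * (2*(k:ℝ)+1)^d := (div_le_iff₀ hden).mp hM
    _ ≤ M * (7^d * L) := mul_le_mul_of_nonneg_left hpow (by linarith)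
    _ = 7^d * (M*L) := by ring
  have hsite : (x i).2^2/2 + U.eval (x i).1 + 1 ≤ 7^d * (M*L) := le_trans hWi hW
  have hU0 := hUpos (x i).1
  have hp0 : (0:ℝ) ≤ (x i).2^2 := sq_nonneg _
  refine ⟨?_, ?_, ?_⟩
  · calc (x i).2^2 + U.eval (x i).1 ≤ 2*(7^d*(M*L)) - 2 := by linarith
    _ ≤ C1 * (M*L) := by rw [hC1]; linarith
    _ ≤ Cb * (M*L) := mul_le_mul_of_nonneg_right hC1C hMLnn
    _ = Cb * M * L := by ring
  · have hUq : U.eval (x i).1 ≤ 7^d * (M*L) := by linarith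
    have h2 : c2 ≤ c2 * (M*L) := by
      have := mul_le_mul_of_nonneg_left hML hc2; linarith
    have h3 : c1 * U.eval (x i).1 ≤ c1 * (7^d*(M*L)) := mul_le_mul_of_nonneg_left hUq hc1
    have h4 : (0:ℝ) ≤ 7^d * c1 * (M*L) := by positivity
    have hq4 : (x i).1^4 ≤ C2 * (M*L) := by
      rw [hC2, hC1]; linarith [hpoly (x i).1]
    calc (x i).1^4 ≤ C2 * (M*L) := hq4
    _ ≤ Cb * (M*L) := mul_le_mul_of_nonneg_right hC2C hMLnn
    _ = Cb * M * L := by ring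
  · have hq4 : (x i).1^4 ≤ C2 * (M*L) := by
      have h2 : c2 ≤ c2 * (M*L) := by
        have := mul_le_mul_of_nonneg_left hML hc2; linarith
      have hUq : U.eval (x i).1 ≤ 7^d * (M*L) := by linarith
      have h3 : c1 * U.eval (x i).1 ≤ c1 * (7^d*(M*L)) := mul_le_mul_of_nonneg_left hUq hc1
      have h4 : (0:ℝ) ≤ 7^d * c1 * (M*L) := by positivity
      rw [hC2, hC1]; linarith [hpoly (x i).1]
    have hq2 : (x i).1^2 ≤ Real.sqrt (C2*(M*L)) := by
      have hsq : (x i).1^2 = Real.sqrt ((x i).1^4) := by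
        rw [show (x i).1^4 = ((x i).1^2)^2 by ring, Real.sqrt_sq (sq_nonneg _)]
      rw [hsq]; exact Real.sqrt_le_sqrt hq4
    have hsqrtmul : Real.sqrt (C2*(M*L)) = Real.sqrt C2 * Real.sqrt (M*L) :=
      Real.sqrt_mul hC2nn _
    have h1s : 1 ≤ Real.sqrt (M*L) := by
      rw [show (1:ℝ) = Real.sqrt 1 by simp]
      exact Real.sqrt_le_sqrt hML
    calc |(Polynomial.derivative (Polynomial.derivative U)).eval (x i).1|
        ≤ c3 * ((x i).1^2 + 1) := hdd (x i).1
    _ ≤ c3 * (Real.sqrt C2 * Real.sqrt (M*L) + Real.sqrt (M*L)) := by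
        apply mul_le_mul_of_nonneg_left _ hc3
        rw [← hsqrtmul]; linarith
    _ = C3 * Real.sqrt (M*L) := by rw [hC3]; ring
    _ ≤ Cb * Real.sqrt (M*L) := mul_le_mul_of_nonneg_right hC3C (Real.sqrt_nonneg _)
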